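/- For ξ_m > 0 and μ ∈ (0, ξ_m), the function f(τ) = 2τ·log(cosh(ξ_m/(2τ))/cosh(μ/(2τ))) + μ·∫₀^μ tanh(ξ/(2τ))/ξ dξ is strictly decreasing in τ on (0, ∞), with f(τ) → ∞ as τ → 0⁺ and f(τ) → 0 as τ → ∞. -/

import Mathlib

open Filter Topology MeasureTheory intervalIntegral

lemma ctp_continuous_tanh : Continuous Real.tanh := by
  have h : Real.tanh = fun x => Real.sinh x / Real.cosh x :=
    funext fun x => Real.tanh_eq_sinh_div_cosh x
  rw [h]
  exact Real.continuous_sinh.div Real.continuous_cosh fun x => (Real.cosh_pos x).ne'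

lemma ctp_tanh_nonneg {x : ℝ} (hx : 0 ≤ x) : 0 ≤ Real.tanh x := by
  rw [Real.tanh_eq_sinh_div_cosh]
  exact div_nonneg (Real.sinh_nonneg_iff.mpr hx) (Real.cosh_pos x).le

lemma ctp_tanh_lt_tanh {x y : ℝ} (h : x < y) : Real.tanh x < Real.tanh y := by
  rw [Real.tanh_eq_sinh_div_cosh, Real.tanh_eq_sinh_div_cosh,
    div_lt_div_iff₀ (Real.cosh_pos x) (Real.cosh_pos y)]
  have h2 : Real.sinh (x - y) < 0 := Real.sinh_neg_iff.mpr (by linarith)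
  rw [Real.sinh_sub] at h2
  linarith

lemma ctp_tanh_mono : Monotone Real.tanh := fun x y h => by
  rcases eq_or_lt_of_le h with rfl | h
  · exact le_refl _
  · exact (ctp_tanh_lt_tanh h).le

lemma ctp_sinh_le_mul_cosh {x : ℝ} (hx : 0 ≤ x) : Real.sinh x ≤ x * Real.cosh x := by
  have key : ∀ y : ℝ, HasDerivAt (fun t => t * Real.cosh t - Real.sinh t) (y * Real.sinh y) y := by
    intro y
    have h1 := ((hasDerivAt_id y).mul (Real.hasDerivAt_cosh y)).sub (Real.hasDerivAt_sinh y)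
    exact h1.congr_deriv (by simp [id])
  have mono : MonotoneOn (fun t => t * Real.cosh t - Real.sinh t) (Set.Ici 0) := by
    apply monotoneOn_of_deriv_nonneg (convex_Ici 0)
    · exact ((continuous_id.mul Real.continuous_cosh).sub Real.continuous_sinh).continuousOn
    · intro y hy
      exact ((key y).differentiableAt).differentiableWithinAt
    · intro y hy
      rw [interior_Ici] at hy
      rw [(key y).deriv]
      exact mul_nonneg (le_of_lt hy) (Real.sinh_nonneg_iff.mpr (le_of_lt hy))
  have := mono (Set.self_mem_Ici) hx hx
  simp at this
  linarith

lemma ctp_tanh_le_self {x : ℝ} (hx : 0 ≤ x) : Real.tanh x ≤ x := by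
  rw [Real.tanh_eq_sinh_div_cosh, div_le_iff₀ (Real.cosh_pos x)]
  exact ctp_sinh_le_mul_cosh hx

lemma ctp_tanh_one_pos : 0 < Real.tanh 1 := by
  have := ctp_tanh_lt_tanh (show (0:ℝ) < 1 by norm_num)
  rwa [Real.tanh_zero] at this

lemma ctp_log_cosh_integral (τ a b : ℝ) (hτ : 0 < τ) :
    2 * τ * Real.log (Real.cosh (b / (2 * τ)) / Real.cosh (a / (2 * τ)))
      = ∫ x in a..b, Real.tanh (x / (2 * τ)) := by
  have hτ' : (2 : ℝ) * τ ≠ 0 := by positivity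
  have hderiv : ∀ x : ℝ, HasDerivAt (fun x => 2 * τ * Real.log (Real.cosh (x / (2 * τ))))
      (Real.tanh (x / (2 * τ))) x := by
    intro x
    have h1 : HasDerivAt (fun x : ℝ => x / (2 * τ)) (1 / (2 * τ)) x := by
      simpa using (hasDerivAt_id x).div_const (2 * τ)
    have h2 : HasDerivAt (fun x : ℝ => Real.cosh (x / (2 * τ)))
        (Real.sinh (x / (2 * τ)) * (1 / (2 * τ))) x :=
      (Real.hasDerivAt_cosh (x / (2 * τ))).comp (h₂ := Real.cosh) x h1
    have h3 : HasDerivAt (fun x : ℝ => Real.log (Real.cosh (x / (2 * τ))))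
        (Real.sinh (x / (2 * τ)) * (1 / (2 * τ)) / Real.cosh (x / (2 * τ))) x :=
      h2.log (Real.cosh_pos _).ne'
    have h4 := h3.const_mul (2 * τ)
    refine h4.congr_deriv ?_
    rw [Real.tanh_eq_sinh_div_cosh]
    field_simp
  have hcont : Continuous fun x : ℝ => Real.tanh (x / (2 * τ)) :=
    ctp_continuous_tanh.comp (continuous_id.div_const _)
  rw [intervalIntegral.integral_eq_sub_of_hasDerivAt (fun x _ => hderiv x)
    (hcont.intervalIntegrable a b)]
  rw [Real.log_div (Real.cosh_pos _).ne' (Real.cosh_pos _).ne']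
  ring

lemma ctp_g_nonneg (τ : ℝ) (hτ : 0 < τ) {x : ℝ} (hx : 0 ≤ x) :
    0 ≤ Real.tanh (x / (2 * τ)) / x :=
  div_nonneg (ctp_tanh_nonneg (by positivity)) hx

lemma ctp_g_bound (τ : ℝ) (hτ : 0 < τ) {x : ℝ} (hx : 0 ≤ x) :
    Real.tanh (x / (2 * τ)) / x ≤ 1 / (2 * τ) := by
  rcases eq_or_lt_of_le hx with rfl | hx0
  · simp
    positivity
  · have h1 : Real.tanh (x / (2 * τ)) / x ≤ (x / (2 * τ)) / x :=
      (div_le_div_iff_of_pos_right hx0).mpr (ctp_tanh_le_self (by positivity))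
    calc Real.tanh (x / (2 * τ)) / x ≤ (x / (2 * τ)) / x := h1
      _ = 1 / (2 * τ) := by field_simp

lemma ctp_integrable (τ : ℝ) (hτ : 0 < τ) {a b : ℝ} (ha : 0 ≤ a) (hab : a ≤ b) :
    IntervalIntegrable (fun ξ => Real.tanh (ξ / (2 * τ)) / ξ) volume a b := by
  rw [intervalIntegrable_iff_integrableOn_Ioc_of_le hab]
  apply Measure.integrableOn_of_bounded (M := 1 / (2 * τ)) measure_Ioc_lt_top.ne
  · exact ((ctp_continuous_tanh.comp (continuous_id.div_const _)).measurable.div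
      measurable_id).aestronglyMeasurable
  · filter_upwards [ae_restrict_mem measurableSet_Ioc] with x hx
    have hx0 : 0 < x := lt_of_le_of_lt ha hx.1
    rw [Real.norm_eq_abs, abs_of_nonneg (ctp_g_nonneg τ hτ hx0.le)]
    exact ctp_g_bound τ hτ hx0.le

theorem critical_temp_rhs_properties (ξm μ : ℝ) (hξ : 0 < ξm) (hμ0 : 0 < μ) (hμ : μ < ξm) :
    StrictAntiOn (fun τ : ℝ =>
        2 * τ * Real.log (Real.cosh (ξm / (2 * τ)) / Real.cosh (μ / (2 * τ)))
          + μ * ∫ ξ in (0 : ℝ)..μ, Real.tanh (ξ / (2 * τ)) / ξ) (Set.Ioi 0) ∧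
    Tendsto (fun τ : ℝ =>
        2 * τ * Real.log (Real.cosh (ξm / (2 * τ)) / Real.cosh (μ / (2 * τ)))
          + μ * ∫ ξ in (0 : ℝ)..μ, Real.tanh (ξ / (2 * τ)) / ξ) (𝓝[>] 0) atTop ∧
    Tendsto (fun τ : ℝ =>
        2 * τ * Real.log (Real.cosh (ξm / (2 * τ)) / Real.cosh (μ / (2 * τ)))
          + μ * ∫ ξ in (0 : ℝ)..μ, Real.tanh (ξ / (2 * τ)) / ξ) atTop (𝓝 0) := by
  have hrep : ∀ τ : ℝ, 0 < τ →
      2 * τ * Real.log (Real.cosh (ξm / (2 * τ)) / Real.cosh (μ / (2 * τ)))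
        + μ * ∫ ξ in (0:ℝ)..μ, Real.tanh (ξ / (2 * τ)) / ξ
      = (∫ x in μ..ξm, Real.tanh (x / (2 * τ)))
        + μ * ∫ ξ in (0:ℝ)..μ, Real.tanh (ξ / (2 * τ)) / ξ := by
    intro τ hτ
    rw [ctp_log_cosh_integral τ μ ξm hτ]
  refine ⟨?_, ?_, ?_⟩
  · -- StrictAntiOn
    intro τ1 h1 τ2 h2 h12
    simp only [Set.mem_Ioi] at h1 h2
    simp only
    rw [hrep τ1 h1, hrep τ2 h2]
    have hcont1 : Continuous fun x : ℝ => Real.tanh (x / (2 * τ1)) :=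
      ctp_continuous_tanh.comp (continuous_id.div_const _)
    have hcont2 : Continuous fun x : ℝ => Real.tanh (x / (2 * τ2)) :=
      ctp_continuous_tanh.comp (continuous_id.div_const _)
    have key : 0 < ∫ x in μ..ξm, (Real.tanh (x / (2 * τ1)) - Real.tanh (x / (2 * τ2))) := by
      apply intervalIntegral_pos_of_pos_on
      · exact (hcont1.sub hcont2).intervalIntegrable _ _
      · intro x hx
        have hx0 : 0 < x := hμ0.trans hx.1
        have hlt : x / (2 * τ2) < x / (2 * τ1) :=
          div_lt_div_of_pos_left hx0 (by positivity) (by linarith)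
        linarith [ctp_tanh_lt_tanh hlt]
      · exact hμ
    rw [intervalIntegral.integral_sub (hcont1.intervalIntegrable _ _)
      (hcont2.intervalIntegrable _ _)] at key
    have hI : (∫ ξ in (0:ℝ)..μ, Real.tanh (ξ / (2 * τ2)) / ξ)
        ≤ ∫ ξ in (0:ℝ)..μ, Real.tanh (ξ / (2 * τ1)) / ξ := by
      apply intervalIntegral.integral_mono_on hμ0.le (ctp_integrable τ2 h2 le_rfl hμ0.le)
        (ctp_integrable τ1 h1 le_rfl hμ0.le)
      intro x hx
      rcases eq_or_lt_of_le hx.1 with rfl | hx0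
      · simp
      · have hle : x / (2 * τ2) ≤ x / (2 * τ1) :=
          (div_lt_div_of_pos_left hx0 (by positivity) (by linarith)).le
        exact (div_le_div_iff_of_pos_right hx0).mpr (ctp_tanh_mono hle)
    have := mul_le_mul_of_nonneg_left hI hμ0.le
    linarith
  · -- 𝓝[>] 0, atTop
    have h2τ : Tendsto (fun τ : ℝ => 2 * τ) (𝓝[>] (0:ℝ)) (𝓝[>] (0:ℝ)) := by
      apply tendsto_nhdsWithin_of_tendsto_nhds_of_eventually_within
      · have h : Continuous fun τ : ℝ => 2 * τ := continuous_const.mul continuous_id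
        have h2 := h.tendsto 0
        rw [mul_zero] at h2
        exact h2.mono_left nhdsWithin_le_nhds
      · filter_upwards [self_mem_nhdsWithin] with τ hτ
        exact mul_pos two_pos (Set.mem_Ioi.mp hτ)
    have hlog : Tendsto (fun τ : ℝ => Real.log (2 * τ)) (𝓝[>] (0:ℝ)) atBot :=
      Real.tendsto_log_nhdsGT_zero.comp h2τ
    have hsub : Tendsto (fun τ : ℝ => Real.log μ - Real.log (2 * τ)) (𝓝[>] (0:ℝ)) atTop := by
      simp only [sub_eq_add_neg]
      exact tendsto_atTop_add_const_left _ _ (tendsto_neg_atBot_atTop.comp hlog)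
    have hlow : Tendsto (fun τ : ℝ => μ * (Real.tanh 1 * (Real.log μ - Real.log (2 * τ))))
        (𝓝[>] (0:ℝ)) atTop :=
      (hsub.const_mul_atTop ctp_tanh_one_pos).const_mul_atTop hμ0
    refine tendsto_atTop_mono' _ ?_ hlow
    filter_upwards [Ioo_mem_nhdsGT_of_mem (Set.left_mem_Ico.mpr (half_pos hμ0))] with τ hτ
    obtain ⟨hτ0, hτμ⟩ := hτ
    have h2τ0 : (0:ℝ) < 2 * τ := by positivity
    have h2τμ : 2 * τ ≤ μ := by linarith
    rw [hrep τ hτ0]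
    have hA0 : 0 ≤ ∫ x in μ..ξm, Real.tanh (x / (2 * τ)) :=
      intervalIntegral.integral_nonneg hμ.le
        (fun x hx => ctp_tanh_nonneg (div_nonneg (hμ0.le.trans hx.1) h2τ0.le))
    have hsplit := intervalIntegral.integral_add_adjacent_intervals
      (ctp_integrable τ hτ0 le_rfl h2τ0.le) (ctp_integrable τ hτ0 h2τ0.le h2τμ)
    have hpos1 : 0 ≤ ∫ ξ in (0:ℝ)..(2 * τ), Real.tanh (ξ / (2 * τ)) / ξ :=
      intervalIntegral.integral_nonneg h2τ0.le (fun x hx => ctp_g_nonneg τ hτ0 hx.1)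
    have heval : ∫ ξ in (2 * τ)..μ, Real.tanh 1 * ξ⁻¹
        = Real.tanh 1 * (Real.log μ - Real.log (2 * τ)) := by
      rw [intervalIntegral.integral_const_mul, integral_inv_of_pos h2τ0 hμ0,
        Real.log_div hμ0.ne' h2τ0.ne']
    have h2 : Real.tanh 1 * (Real.log μ - Real.log (2 * τ))
        ≤ ∫ ξ in (2 * τ)..μ, Real.tanh (ξ / (2 * τ)) / ξ := by
      rw [← heval]
      apply intervalIntegral.integral_mono_on h2τμ
      · exact IntervalIntegrable.const_mul (intervalIntegrable_inv (fun x hx => by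
          have := (Set.uIcc_of_le h2τμ ▸ hx).1
          exact (h2τ0.trans_le this).ne') continuousOn_id) (Real.tanh 1)
      · exact ctp_integrable τ hτ0 h2τ0.le h2τμ
      · intro x hx
        have hx0 : 0 < x := h2τ0.trans_le hx.1
        have h1x : (1:ℝ) ≤ x / (2 * τ) := (one_le_div h2τ0).mpr hx.1
        calc Real.tanh 1 * x⁻¹ ≤ Real.tanh (x / (2 * τ)) * x⁻¹ :=
              mul_le_mul_of_nonneg_right (ctp_tanh_mono h1x) (inv_nonneg.mpr hx0.le)
          _ = Real.tanh (x / (2 * τ)) / x := (div_eq_mul_inv _ _).symm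
    have hItot : Real.tanh 1 * (Real.log μ - Real.log (2 * τ))
        ≤ ∫ ξ in (0:ℝ)..μ, Real.tanh (ξ / (2 * τ)) / ξ := by
      rw [← hsplit]; linarith
    have := mul_le_mul_of_nonneg_left hItot hμ0.le
    linarith
  · -- atTop, 𝓝 0
    have hupper : Tendsto (fun τ : ℝ => ((ξm - μ) * ξm + μ * μ) / (2 * τ)) atTop (𝓝 0) :=
      Filter.Tendsto.div_atTop tendsto_const_nhds (tendsto_id.const_mul_atTop two_pos)
    apply tendsto_of_tendsto_of_tendsto_of_le_of_le' (tendsto_const_nhds (x := (0:ℝ))) hupper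
    · filter_upwards [eventually_gt_atTop (0:ℝ)] with τ hτ0
      rw [hrep τ hτ0]
      have h2τ0 : (0:ℝ) < 2 * τ := by positivity
      have hA0 : 0 ≤ ∫ x in μ..ξm, Real.tanh (x / (2 * τ)) :=
        intervalIntegral.integral_nonneg hμ.le
          (fun x hx => ctp_tanh_nonneg (div_nonneg (hμ0.le.trans hx.1) h2τ0.le))
      have hI0 : 0 ≤ ∫ ξ in (0:ℝ)..μ, Real.tanh (ξ / (2 * τ)) / ξ :=
        intervalIntegral.integral_nonneg hμ0.le (fun x hx => ctp_g_nonneg τ hτ0 hx.1)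
      have := mul_nonneg hμ0.le hI0
      linarith
    · filter_upwards [eventually_gt_atTop (0:ℝ)] with τ hτ0
      rw [hrep τ hτ0]
      have h2τ0 : (0:ℝ) < 2 * τ := by positivity
      have hA : (∫ x in μ..ξm, Real.tanh (x / (2 * τ))) ≤ (ξm - μ) * (ξm / (2 * τ)) := by
        have := intervalIntegral.integral_mono_on hμ.le
          ((ctp_continuous_tanh.comp (continuous_id.div_const _)).intervalIntegrable μ ξm)
          ((_root_.intervalIntegrable_const : IntervalIntegrable (fun _ => ξm / (2 * τ)) volume μ ξm))
          (fun x hx => by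
            have hx0 : 0 ≤ x := hμ0.le.trans hx.1
            calc Real.tanh (x / (2 * τ)) ≤ x / (2 * τ) := ctp_tanh_le_self (by positivity)
              _ ≤ ξm / (2 * τ) := (div_le_div_iff_of_pos_right h2τ0).mpr hx.2)
        rwa [intervalIntegral.integral_const, smul_eq_mul] at this
      have hI : (∫ ξ in (0:ℝ)..μ, Real.tanh (ξ / (2 * τ)) / ξ) ≤ μ * (1 / (2 * τ)) := by
        have := intervalIntegral.integral_mono_on hμ0.le
          (ctp_integrable τ hτ0 le_rfl hμ0.le)
          ((_root_.intervalIntegrable_const : IntervalIntegrable (fun _ => 1 / (2 * τ)) volume 0 μ))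
          (fun x hx => ctp_g_bound τ hτ0 hx.1)
        rwa [intervalIntegral.integral_const, smul_eq_mul, sub_zero] at this
      have hmul := mul_le_mul_of_nonneg_left hI hμ0.le
      have heq : (ξm - μ) * (ξm / (2 * τ)) + μ * (μ * (1 / (2 * τ)))
          = ((ξm - μ) * ξm + μ * μ) / (2 * τ) := by
        field_simp
      linarith
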